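/- For all integers a, b and every natural number n ≥ 1, the coefficient of X^{n−1} in the polynomial ((a + bX + aX^2)^n : ℤ[X]) equals a·n·M^{a,b}_{n−1}. (Equivalently, the constant term of X·(aX^{-1} + b + aX)^n equals a·n·M^{a,b}_{n−1}.) -/
import Mathlib


open Polynomial

/-- The generalized central trinomial coefficient `T^{a,b}_n`:
the coefficient of `X^n` in `(a + bX + aX^2)^n`. -/
noncomputable def genTrinomial (a b : ℤ) (n : ℕ) : ℤ :=
  ((C a + C b * X + C a * X ^ 2) ^ n).coeff n

/-- The generalized Motzkin number `M^{a,b}_n`: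
the coefficient of `X^n` in `(a + bX + aX^2)^n * (1 - X^2)`. -/
noncomputable def genMotzkin (a b : ℤ) (n : ℕ) : ℤ :=
  (((C a + C b * X + C a * X ^ 2) ^ n) * (1 - X ^ 2)).coeff n


private lemma coeff_mul_trinomial (q : ℤ[X]) (a b : ℤ) (k : ℕ) :
    (q * (C a + C b * X + C a * X^2)).coeff (k+2)
      = a * q.coeff (k+2) + b * q.coeff (k+1) + a * q.coeff k := by
  rw [mul_add, mul_add, coeff_add, coeff_add, ← mul_assoc, coeff_mul_C,
    show k+2 = k+1+1 from rfl, coeff_mul_X, coeff_mul_C,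
    show q * (C a * X^2) = q * C a * X * X by ring, coeff_mul_X, coeff_mul_X, coeff_mul_C]
  ring

private lemma coeff_mul_trinomial1 (q : ℤ[X]) (a b : ℤ) :
    (q * (C a + C b * X + C a * X^2)).coeff 1 = a * q.coeff 1 + b * q.coeff 0 := by
  rw [mul_add, mul_add, coeff_add, coeff_add, ← mul_assoc, coeff_mul_C,
    show (1:ℕ) = 0+1 from rfl, coeff_mul_X, coeff_mul_C,
    show q * (C a * X^2) = q * C a * X * X by ring, coeff_mul_X]
  simp [coeff_mul_X_pow']
  ring

private lemma coeff_intCast_one (c : ℤ) : ((c : ℤ[X])).coeff 1 = 0 := by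
  rw [← C_eq_intCast, coeff_C]; simp

private lemma coeff_mul_lin (q : ℤ[X]) (b c : ℤ) (k : ℕ) :
    (q * (C b + C c * X)).coeff (k+1) = b * q.coeff (k+1) + c * q.coeff k := by
  rw [mul_add, coeff_add, coeff_mul_C, ← mul_assoc, coeff_mul_X, coeff_mul_C]; ring

private lemma coeff_mul_onesub (q : ℤ[X]) (k : ℕ) :
    (q * (1 - X^2)).coeff (k+2) = q.coeff (k+2) - q.coeff k := by
  rw [mul_sub, mul_one, coeff_sub, coeff_mul_X_pow]

private lemma deriv_tri (a b : ℤ) :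
    derivative (C a + C b * X + C a * X^2) = C b + C (2*a) * X := by
  simp; ring

theorem stmt1 (a b : ℤ) (n : ℕ) (hn : 1 ≤ n) :
    ((C a + C b * X + C a * X ^ 2) ^ n).coeff (n - 1) = a * (n : ℤ) * genMotzkin a b (n - 1) := by
  set P : ℤ[X] := C a + C b * X + C a * X ^ 2 with hP
  match n, hn with
  | 1, _ =>
    simp [genMotzkin, hP, coeff_one]
  | 2, _ =>
    have h1 : (P^2).coeff 1 = 2*a*b := by
      rw [sq, hP]
      rw [coeff_mul_trinomial1]
      simp [hP, coeff_add, coeff_C, coeff_C_mul, coeff_X_pow, coeff_X, coeff_intCast_one]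
      ring
    have h2 : genMotzkin a b 1 = b := by
      rw [genMotzkin, pow_one, mul_sub, mul_one, coeff_sub, coeff_mul_X_pow']
      simp [coeff_add, coeff_C, coeff_C_mul, coeff_X_pow, coeff_X, coeff_intCast_one]
    rw [show (2:ℕ)-1 = 1 from rfl, h1, h2]
    push_cast
    ring
  | (m+3), _ =>
    set t : ℕ → ℤ := fun j => (P^(m+2)).coeff j with ht
    have hd : derivative (P^(m+3)) = C ((m:ℤ)+3) * (P^(m+2) * (C b + C (2*a) * X)) := by
      rw [derivative_pow, hP, deriv_tri, ← hP]
      push_cast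
      ring
    have h1 : (P^(m+3)).coeff (m+2) * ((m:ℤ)+2) = ((m:ℤ)+3) * (b * t (m+1) + 2*a * t m) := by
      have := coeff_derivative (P^(m+3)) (m+1)
      rw [hd, coeff_C_mul, coeff_mul_lin] at this
      push_cast at this ⊢
      linarith [this]
    have h2 : (P^(m+3)).coeff (m+2) = a * t (m+2) + b * t (m+1) + a * t m := by
      rw [show P^(m+3) = P^(m+2) * P by ring, hP, coeff_mul_trinomial]
    have hM : genMotzkin a b (m+2) = t (m+2) - t m := by
      rw [genMotzkin, ← hP, coeff_mul_onesub]
    rw [show m+3-1 = m+2 from rfl, hM]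
    push_cast
    linear_combination ((m:ℤ)+3) * h2 - h1
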